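/- Let G be a hyperbolic TDLC group and let H be an open subgroup of G. Then H is quasiconvex in G if and only if every limit point of H is conical. -/

import Mathlib

open scoped Pointwise

/-! Basic framework for hyperbolic TDLC groups, Cayley-Abels graphs, quasiconvexity,
Gromov boundaries of locally finite graphs, and graph-of-groups decompositions
(encoded, via Bass-Serre theory, as actions on trees). -/

/-- A (second countable Hausdorff) topological group is TDLC if it is a topological group
which is locally compact and totally disconnected. -/
def IsTDLC (G : Type*) [Group G] [TopologicalSpace G] : Prop :=
  IsTopologicalGroup G ∧ LocallyCompactSpace G ∧ TotallyDisconnectedSpace G ∧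
    T2Space G ∧ SecondCountableTopology G

/-- A topological group is compactly generated if it is generated (as a group) by a
compact subset. -/
def CompactlyGeneratedGroup (G : Type*) [Group G] [TopologicalSpace G] : Prop :=
  ∃ K : Set G, IsCompact K ∧ Subgroup.closure K = ⊤

/-- The coset graph: vertices are the left cosets `gU`, and `gU`, `gaU` are joined by an
edge for `a ∈ A`. -/
def cosetGraph (G : Type*) [Group G] (U : Subgroup G) (A : Set G) :
    SimpleGraph (G ⧸ U) where
  Adj c c' := c ≠ c' ∧ ∃ x y : G, QuotientGroup.mk x = c ∧ QuotientGroup.mk y = c' ∧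
      ((∃ a ∈ A, ∃ u ∈ U, x⁻¹ * y = a * u) ∨ (∃ a ∈ A, ∃ u ∈ U, y⁻¹ * x = a * u))
  symm := by
    constructor
    rintro c c' ⟨hne, x, y, hx, hy, h⟩
    exact ⟨hne.symm, y, x, hy, hx, h.symm⟩
  loopless := by constructor; rintro c ⟨hne, -⟩; exact hne rfl

/-- The data `(U, A)` of a Cayley-Abels graph of a topological group `G`: a compact open
subgroup `U` and a finite symmetric set `A` containing the identity with `UAU = AU` and
`G = ⟨A⟩U`.  (By Krön–Möller, every Cayley-Abels graph of a compactly generated TDLC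
group arises this way.) -/
structure CayleyAbelsData (G : Type*) [Group G] [TopologicalSpace G] where
  U : Subgroup G
  A : Finset G
  U_compact : IsCompact (U : Set G)
  U_open : IsOpen (U : Set G)
  one_mem : (1 : G) ∈ A
  A_symm : ∀ a ∈ A, a⁻¹ ∈ A
  UAU_eq : (U : Set G) * (A : Set G) * (U : Set G) = (A : Set G) * (U : Set G)
  gen : ∀ g : G, ∃ b ∈ Subgroup.closure (A : Set G), ∃ u ∈ U, g = b * u

/-- The Cayley-Abels graph associated to Cayley-Abels data. -/
def caGraph {G : Type*} [Group G] [TopologicalSpace G] (d : CayleyAbelsData G) :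
    SimpleGraph (G ⧸ d.U) :=
  cosetGraph G d.U (d.A : Set G)

/-- Gromov hyperbolicity of a (connected) graph, via the four-point condition on the
graph metric. -/
def GromovHyperbolic {V : Type*} (Γ : SimpleGraph V) : Prop :=
  ∃ δ : ℕ, ∀ x y z w : V,
    Γ.dist x y + Γ.dist z w ≤ max (Γ.dist x z + Γ.dist y w) (Γ.dist x w + Γ.dist y z) + 2 * δ

/-- A compactly generated TDLC group is hyperbolic if some (equivalently, any)
Cayley-Abels graph of it is Gromov hyperbolic. -/
def IsHyperbolicGroup (G : Type*) [Group G] [TopologicalSpace G] : Prop :=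
  ∃ d : CayleyAbelsData G, GromovHyperbolic (caGraph d)

/-- A subset `S` of (the vertex set of) a graph is quasiconvex if there is `D ≥ 0` such
that every geodesic (length-minimizing walk) joining two points of `S` stays in the
`D`-neighbourhood of `S`. -/
def QuasiconvexSet {V : Type*} (Γ : SimpleGraph V) (S : Set V) : Prop :=
  ∃ D : ℕ, ∀ u v : V, u ∈ S → v ∈ S → ∀ p : Γ.Walk u v, p.length = Γ.dist u v →
    ∀ x ∈ p.support, ∃ s ∈ S, Γ.dist x s ≤ D

/-- The orbit of the vertex (coset) `c` of a coset graph under a subgroup `H`. -/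
def cosetOrbit {G : Type*} [Group G] (H U : Subgroup G) (c : G ⧸ U) : Set (G ⧸ U) :=
  {c' | ∃ h ∈ H, ∃ x : G, QuotientGroup.mk x = c ∧ QuotientGroup.mk (h * x) = c'}

/-- A subgroup `H` of `G` is quasiconvex if some `H`-orbit of a vertex of some
Cayley-Abels graph of `G` is a quasiconvex subset. -/
def QuasiconvexSubgroup {G : Type*} [Group G] [TopologicalSpace G] (H : Subgroup G) : Prop :=
  ∃ d : CayleyAbelsData G, ∃ c : G ⧸ d.U,
    QuasiconvexSet (caGraph d) (cosetOrbit H d.U c)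

/-- A (hyperbolic TDLC) group is locally quasiconvex if every open compactly generated
subgroup is quasiconvex. -/
def LocallyQuasiconvex (G : Type*) [Group G] [TopologicalSpace G] : Prop :=
  ∀ H : Subgroup G, IsOpen (H : Set G) → CompactlyGeneratedGroup ↥H → QuasiconvexSubgroup H

/-- A quasiisometric embedding between (the vertex sets of) two graphs, with respect to
the graph metrics. -/
def GraphQIEmbedding {V W : Type*} (Γ : SimpleGraph V) (Δ : SimpleGraph W) (f : V → W) :
    Prop :=
  ∃ l e : ℝ, 1 ≤ l ∧ 0 ≤ e ∧ ∀ x y : V,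
    ((Δ.dist (f x) (f y) : ℝ) ≤ l * (Γ.dist x y : ℝ) + e) ∧
    ((Γ.dist x y : ℝ) ≤ l * (Δ.dist (f x) (f y) : ℝ) + e)

/-- A quasiisometry between two graphs: a quasiisometric embedding with coarsely dense
image. -/
def GraphQuasiIsometry {V W : Type*} (Γ : SimpleGraph V) (Δ : SimpleGraph W) (f : V → W) :
    Prop :=
  GraphQIEmbedding Γ Δ f ∧ ∃ D : ℕ, ∀ w : W, ∃ v : V, Δ.dist (f v) w ≤ D

/-- `H` has height at least `n` in `G`: there are `n` pairwise distinct cosets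
`g₁H, …, gₙH` such that the intersection `⋂ᵢ gᵢ⁻¹Hgᵢ` is not compact. -/
def HeightAtLeast {G : Type*} [Group G] [TopologicalSpace G] (H : Subgroup G) (n : ℕ) :
    Prop :=
  ∃ g : Fin n → G, (∀ i j, i ≠ j → (g i)⁻¹ * g j ∉ H) ∧
    ¬ IsCompact {x : G | ∀ i, g i * x * (g i)⁻¹ ∈ H}

/-- `H` has finite height in `G`: there is a maximal `n` as above. -/
def FiniteHeight {G : Type*} [Group G] [TopologicalSpace G] (H : Subgroup G) : Prop :=
  ∃ n : ℕ, ∀ m : ℕ, HeightAtLeast H m → m ≤ n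

/-! ### Gromov boundary of a graph -/

/-- A geodesic ray in a graph. -/
def IsGeodesicRay {V : Type*} (Γ : SimpleGraph V) (r : ℕ → V) : Prop :=
  ∀ i j : ℕ, i ≤ j → Γ.dist (r i) (r j) = j - i

/-- The space of geodesic rays of a graph (topologized, for a locally finite graph, as a
subspace of the product of countably many copies of the discrete vertex set). -/
def GeodesicRay {V : Type*} (Γ : SimpleGraph V) : Type _ :=
  {r : ℕ → V // IsGeodesicRay Γ r}

/-- Two geodesic rays are equivalent when their images are at finite Hausdorff
distance. -/
def raysEquiv {V : Type*} (Γ : SimpleGraph V) (r s : GeodesicRay Γ) : Prop :=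
  ∃ C : ℕ, (∀ i, ∃ j, Γ.dist (r.1 i) (s.1 j) ≤ C) ∧ ∀ j, ∃ i, Γ.dist (r.1 i) (s.1 j) ≤ C

/-- The Gromov boundary of a (locally finite hyperbolic) graph: geodesic rays modulo
finite Hausdorff distance, with the quotient topology from the ray space. -/
def GromovBoundary {V : Type*} (Γ : SimpleGraph V) : Type _ :=
  Quot (raysEquiv Γ)

instance gromovBoundaryTopology {V : Type*} (Γ : SimpleGraph V) :
    TopologicalSpace (GromovBoundary Γ) :=
  letI : TopologicalSpace V := ⊥
  letI : TopologicalSpace (GeodesicRay Γ) :=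
    inferInstanceAs (TopologicalSpace {r : ℕ → V // IsGeodesicRay Γ r})
  inferInstanceAs (TopologicalSpace (Quot (raysEquiv Γ)))

/-- A sequence `x` in (the vertex set of) a graph converges to the boundary point `ξ` if
the Gromov products (based at `w`) of the terms of `x` with the points of a geodesic ray
representing `ξ` tend to infinity. -/
def convergesTo {V : Type*} (Γ : SimpleGraph V) (w : V) (x : ℕ → V)
    (ξ : GromovBoundary Γ) : Prop :=
  ∃ s : GeodesicRay Γ, Quot.mk (raysEquiv Γ) s = ξ ∧
    ∀ M : ℕ, ∃ N : ℕ, ∀ n k : ℕ, N ≤ n → N ≤ k →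
      M + Γ.dist (x n) (s.1 k) ≤ Γ.dist (x n) w + Γ.dist w (s.1 k)

/-- The limit set of a subset `O` of a graph: all boundary points which are limits of
sequences in `O`. -/
def limitSet {V : Type*} (Γ : SimpleGraph V) (w : V) (O : Set V) :
    Set (GromovBoundary Γ) :=
  {ξ | ∃ x : ℕ → V, (∀ n, x n ∈ O) ∧ convergesTo Γ w x ξ}

/-- A hyperbolic group is non-elementary if its Gromov boundary has at least three
points. -/
def NonElementaryHyperbolic (G : Type*) [Group G] [TopologicalSpace G] : Prop :=
  ∃ d : CayleyAbelsData G, GromovHyperbolic (caGraph d) ∧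
    ∃ a b c : GromovBoundary (caGraph d), a ≠ b ∧ a ≠ c ∧ b ≠ c

/-! ### Unordered distinct triples -/

/-- Ordered triples of pairwise distinct points of `Z`. -/
def DistinctTriple (Z : Type*) : Type _ :=
  {f : Fin 3 → Z // Function.Injective f}

/-- Two distinct triples are identified if they differ by a permutation. -/
def tripleRel (Z : Type*) (f g : DistinctTriple Z) : Prop :=
  ∃ σ : Equiv.Perm (Fin 3), f.1 = g.1 ∘ σ

/-- The space `θ(Z)` of distinct unordered triples of points of `Z`, topologized as a
quotient of a subspace of `Z³`. -/
def UnorderedTriples (Z : Type*) : Type _ :=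
  Quot (tripleRel Z)

instance distinctTripleTopology (Z : Type*) [TopologicalSpace Z] :
    TopologicalSpace (DistinctTriple Z) :=
  inferInstanceAs (TopologicalSpace {f : Fin 3 → Z // Function.Injective f})

instance unorderedTriplesTopology (Z : Type*) [TopologicalSpace Z] :
    TopologicalSpace (UnorderedTriples Z) :=
  inferInstanceAs (TopologicalSpace (Quot (tripleRel Z)))

/-! ### Graph-of-groups decompositions, via actions on trees (Bass-Serre theory).

By Bass-Serre theory, a realization of a topological group `G` as the fundamental group
of a finite graph of topological groups (with the canonical topology, in which the vertex
groups are open) is the same thing as an action of `G` on a tree, without inversions,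
with finitely many orbits of vertices and edges and with open vertex stabilizers; the
vertex (resp. edge) groups are the stabilizers of the vertices (resp. edges) of the
tree. -/
structure TreeDecomp (G : Type*) [Group G] [TopologicalSpace G] where
  V : Type*
  tree : SimpleGraph V
  isTree : tree.IsTree
  smul : G → V → V
  smul_one : ∀ v, smul 1 v = v
  smul_mul : ∀ g h v, smul (g * h) v = smul g (smul h v)
  smul_adj : ∀ g u v, tree.Adj u v → tree.Adj (smul g u) (smul g v)
  noInversions : ∀ g u v, tree.Adj u v → ¬(smul g u = v ∧ smul g v = u)
  stab_open : ∀ v, IsOpen {g : G | smul g v = v}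
  finVert : ∃ S : Finset V, ∀ v : V, ∃ g : G, ∃ s ∈ S, smul g s = v
  finEdge : ∃ S : Finset (V × V), ∀ u v : V, tree.Adj u v →
    ∃ g : G, ∃ e ∈ S, smul g e.1 = u ∧ smul g e.2 = v

/-- The stabilizer of a vertex of the tree: a "vertex group" of the corresponding graph
of groups (up to conjugacy). -/
def TreeDecomp.vStab {G : Type*} [Group G] [TopologicalSpace G] (T : TreeDecomp G)
    (v : T.V) : Subgroup G where
  carrier := {g : G | T.smul g v = v}
  one_mem' := T.smul_one v
  mul_mem' := by
    intro a b ha hb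
    simp only [Set.mem_setOf_eq] at ha hb ⊢
    rw [T.smul_mul, hb, ha]
  inv_mem' := by
    intro a ha
    simp only [Set.mem_setOf_eq] at ha ⊢
    have h1 : T.smul (a⁻¹ * a) v = v := by
      rw [inv_mul_cancel]; exact T.smul_one v
    rw [T.smul_mul, ha] at h1
    exact h1

/-- The action of `G` on the Bass-Serre tree is acylindrical: for some `k`, the pointwise
stabilizer of every geodesic of length greater than `k` is compact. -/
def TreeDecomp.Acylindrical {G : Type*} [Group G] [TopologicalSpace G]
    (T : TreeDecomp G) : Prop :=
  ∃ k : ℕ, ∀ (u v : T.V) (p : T.tree.Walk u v), p.length = T.tree.dist u v →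
    k < p.length → IsCompact {g : G | ∀ x ∈ p.support, T.smul g x = x}

/-- A limit point `ξ` of (the orbit) `O` is conical if for every geodesic ray `α`
representing `ξ` there is a radius `r ≥ 0` such that the `r`-neighbourhood of `α` meets
`O` cofinally along the ray. -/
def IsConicalLimitPoint {V : Type*} (Γ : SimpleGraph V) (O : Set V)
    (ξ : GromovBoundary Γ) : Prop :=
  ∀ α : GeodesicRay Γ, Quot.mk (raysEquiv Γ) α = ξ →
    ∃ r : ℕ, ∀ N : ℕ, ∃ i : ℕ, N ≤ i ∧ ∃ y ∈ O, Γ.dist (α.1 i) y ≤ r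


/-! ### Auxiliary lemmas for the proof -/

namespace QCP
open SimpleGraph

variable {V : Type*} {Γ : SimpleGraph V}

lemma dist_start_getVert_le (hc : Γ.Connected) {u v : V} (p : Γ.Walk u v) (i : ℕ) :
    Γ.dist u (p.getVert i) ≤ i := by
  induction p generalizing i with
  | nil => simp [SimpleGraph.Walk.getVert, SimpleGraph.dist_self]
  | @cons a b c h q ih =>
    cases i with
    | zero => simp [SimpleGraph.dist_self]
    | succ i =>
      rw [SimpleGraph.Walk.getVert_cons_succ]
      calc Γ.dist a (q.getVert i) ≤ Γ.dist a b + Γ.dist b (q.getVert i) := hc.dist_triangle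
        _ ≤ 1 + i := by
            have h1 : Γ.dist a b ≤ 1 := by
              have := SimpleGraph.dist_le (SimpleGraph.Walk.cons h SimpleGraph.Walk.nil)
              simpa using this
            exact Nat.add_le_add h1 (ih i)
        _ = i + 1 := by omega

lemma dist_getVert_getVert_le (hc : Γ.Connected) {u v : V} (p : Γ.Walk u v) (i j : ℕ)
    (hij : i ≤ j) : Γ.dist (p.getVert i) (p.getVert j) ≤ j - i := by
  induction p generalizing i j with
  | nil => simp [SimpleGraph.Walk.getVert, SimpleGraph.dist_self]
  | @cons a b c h q ih =>
    cases i with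
    | zero =>
      simpa using dist_start_getVert_le hc (SimpleGraph.Walk.cons h q) j |>.trans (by omega)
    | succ i =>
      cases j with
      | zero => omega
      | succ j =>
        rw [SimpleGraph.Walk.getVert_cons_succ, SimpleGraph.Walk.getVert_cons_succ]
        have := ih i j (by omega)
        omega

lemma geodesic_getVert_dist (hc : Γ.Connected) {u v : V} (p : Γ.Walk u v)
    (hp : p.length = Γ.dist u v) {i j : ℕ} (hij : i ≤ j) (hj : j ≤ p.length) :
    Γ.dist (p.getVert i) (p.getVert j) = j - i := by
  have h1 : Γ.dist u (p.getVert i) ≤ i := dist_start_getVert_le hc p i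
  have h2 : Γ.dist (p.getVert i) (p.getVert j) ≤ j - i := dist_getVert_getVert_le hc p i j hij
  have h3 : Γ.dist (p.getVert j) v ≤ p.length - j := by
    have := dist_getVert_getVert_le hc p j p.length hj
    rwa [SimpleGraph.Walk.getVert_length] at this
  have h4 : Γ.dist u v ≤ Γ.dist u (p.getVert j) + Γ.dist (p.getVert j) v := hc.dist_triangle
  have h5 : Γ.dist u (p.getVert j) ≤ Γ.dist u (p.getVert i) + Γ.dist (p.getVert i) (p.getVert j) :=
    hc.dist_triangle
  omega

/-- doubled Gromov product, as an integer -/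
noncomputable def P (Γ : SimpleGraph V) (p x y : V) : ℤ :=
  (Γ.dist p x : ℤ) + (Γ.dist p y : ℤ) - (Γ.dist x y : ℤ)

lemma P_comm (p x y : V) : P Γ p x y = P Γ p y x := by
  unfold P; rw [SimpleGraph.dist_comm (u := x)]; ring

/-- hyperbolicity in Gromov-product form -/
lemma prodB {δ : ℕ}
    (hδ : ∀ x y z w : V, Γ.dist x y + Γ.dist z w ≤
      max (Γ.dist x z + Γ.dist y w) (Γ.dist x w + Γ.dist y z) + 2 * δ)
    (p x y z : V) :
    min (P Γ p x y) (P Γ p y z) - 2 * δ ≤ P Γ p x z := by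
  have h := hδ x z y p
  have c1 : Γ.dist x p = Γ.dist p x := SimpleGraph.dist_comm
  have c2 : Γ.dist y p = Γ.dist p y := SimpleGraph.dist_comm
  have c3 : Γ.dist z p = Γ.dist p z := SimpleGraph.dist_comm
  have c4 : Γ.dist z y = Γ.dist y z := SimpleGraph.dist_comm
  unfold P
  rcases max_cases (Γ.dist x y + Γ.dist z p) (Γ.dist x p + Γ.dist z y) with ⟨he, _⟩ | ⟨he, _⟩ <;>
    rw [he] at h <;>
    rcases min_cases ((Γ.dist p x : ℤ) + (Γ.dist p y : ℤ) - (Γ.dist x y : ℤ))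
      ((Γ.dist p y : ℤ) + (Γ.dist p z : ℤ) - (Γ.dist y z : ℤ)) with ⟨hm, _⟩ | ⟨hm, _⟩ <;>
    rw [hm] <;> omega

/-- basepoint change for doubled products -/
lemma P_basepoint (hc : Γ.Connected) (p q x y : V) :
    P Γ p x y - 2 * (Γ.dist p q : ℤ) ≤ P Γ q x y := by
  unfold P
  have h1 : Γ.dist q x ≤ Γ.dist q p + Γ.dist p x := hc.dist_triangle
  have h2 : Γ.dist q y ≤ Γ.dist q p + Γ.dist p y := hc.dist_triangle
  have h3 : Γ.dist p x ≤ Γ.dist p q + Γ.dist q x := hc.dist_triangle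
  have h4 : Γ.dist p y ≤ Γ.dist p q + Γ.dist q y := hc.dist_triangle
  have h5 : Γ.dist q p = Γ.dist p q := SimpleGraph.dist_comm
  omega

/-- a point is close to any geodesic between two points, up to its Gromov product. -/
lemma near_geodesic (hc : Γ.Connected) {δ : ℕ}
    (hδ : ∀ x y z w : V, Γ.dist x y + Γ.dist z w ≤
      max (Γ.dist x z + Γ.dist y w) (Γ.dist x w + Γ.dist y z) + 2 * δ)
    {a b : V} (p : Γ.Walk a b) (hp : p.length = Γ.dist a b) (m : V) :
    ∃ t ≤ p.length, 2 * (Γ.dist m (p.getVert t) : ℤ) ≤ P Γ m a b + 4 * δ + 2 := by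
  set L := p.length with hL
  have hab : Γ.dist a b = L := hp.symm
  have htri1 : Γ.dist a m ≤ Γ.dist a b + Γ.dist b m := hc.dist_triangle
  have htri2 : Γ.dist b m ≤ Γ.dist b a + Γ.dist a m := hc.dist_triangle
  have hba : Γ.dist b a = Γ.dist a b := SimpleGraph.dist_comm
  set X : ℤ := (L : ℤ) + (Γ.dist a m : ℤ) - (Γ.dist b m : ℤ) with hX
  have hX0 : 0 ≤ X := by simp only [hX]; omega
  have hX2L : X ≤ 2 * L := by simp only [hX]; omega
  set t : ℕ := (X / 2).toNat with ht
  have h2t' : (t : ℤ) = X / 2 := by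
    rw [ht]; exact Int.toNat_of_nonneg (Int.ediv_nonneg hX0 (by norm_num))
  have h2t : 2 * (t : ℤ) = X ∨ 2 * (t : ℤ) = X - 1 := by omega
  have htL : t ≤ L := by
    have : (t : ℤ) ≤ L := by omega
    exact_mod_cast this
  refine ⟨t, htL, ?_⟩
  have hda : Γ.dist a (p.getVert t) = t := by
    have := geodesic_getVert_dist hc p hp (Nat.zero_le t) htL
    rwa [SimpleGraph.Walk.getVert_zero, Nat.sub_zero] at this
  have hdb : Γ.dist (p.getVert t) b = L - t := by
    have := geodesic_getVert_dist hc p hp htL (le_refl L)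
    rwa [SimpleGraph.Walk.getVert_length] at this
  have hdbZ : (Γ.dist (p.getVert t) b : ℤ) = (L : ℤ) - t := by rw [hdb]; omega
  have h := hδ m (p.getVert t) a b
  have c1 : Γ.dist (p.getVert t) a = Γ.dist a (p.getVert t) := SimpleGraph.dist_comm
  have c2 : Γ.dist m a = Γ.dist a m := SimpleGraph.dist_comm
  have c3 : Γ.dist m b = Γ.dist b m := SimpleGraph.dist_comm
  unfold P
  rcases max_cases (Γ.dist m a + Γ.dist (p.getVert t) b)
    (Γ.dist m b + Γ.dist (p.getVert t) a) with ⟨he, _⟩ | ⟨he, _⟩ <;> rw [he] at h <;> omega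

open SimpleGraph

variable {V : Type*} {Γ : SimpleGraph V}

lemma ball_finite (hc : Γ.Connected) (hlf : ∀ v : V, {u | Γ.Adj v u}.Finite)
    (c : V) : ∀ R : ℕ, {v : V | Γ.dist c v ≤ R}.Finite := by
  intro R
  induction R with
  | zero =>
    apply Set.Finite.subset (Set.finite_singleton c)
    intro v hv
    simp only [Set.mem_setOf_eq, Nat.le_zero] at hv
    have := (hc.dist_eq_zero_iff (u := c) (v := v)).mp hv
    simp [this]
  | succ R ih =>
    apply Set.Finite.subset (ih.union (ih.biUnion (fun u _ => hlf u)))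
    intro v hv
    simp only [Set.mem_setOf_eq] at hv
    rcases Nat.lt_or_ge (Γ.dist c v) (R + 1) with h | h
    · exact Or.inl (by simpa using Nat.lt_succ_iff.mp h)
    have hdv : Γ.dist c v = R + 1 := le_antisymm hv h
    obtain ⟨p, hp⟩ := hc.exists_walk_length_eq_dist c v
    have hlen : p.length = R + 1 := by rw [hp, hdv]
    refine Or.inr ?_
    simp only [Set.mem_iUnion, Set.mem_setOf_eq]
    refine ⟨p.getVert R, ?_, ?_⟩
    · have := geodesic_getVert_dist hc p hp (Nat.zero_le R) (by omega)
      rw [SimpleGraph.Walk.getVert_zero, Nat.sub_zero] at this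
      simp [this]
    · have := p.adj_getVert_succ (i := R) (by omega)
      have hv' : p.getVert (R + 1) = v := by rw [← hlen, SimpleGraph.Walk.getVert_length]
      rwa [hv'] at this

/-- pigeonhole: an infinite set mapping into a finite set has an infinite fiber -/
lemma infinite_fiber {T : Set ℕ} (hT : T.Infinite) (g : ℕ → V) {B : Set V} (hB : B.Finite)
    (hg : ∀ n ∈ T, g n ∈ B) : ∃ v ∈ B, {n ∈ T | g n = v}.Infinite := by
  by_contra hcon
  push_neg at hcon
  have : T ⊆ ⋃ v ∈ B, {n ∈ T | g n = v} := by
    intro n hn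
    simp only [Set.mem_iUnion]
    exact ⟨g n, hg n hn, hn, rfl⟩
  exact hT (Set.Finite.subset (hB.biUnion (fun v hv => hcon v hv)) this)

/-- König-style diagonal extraction of a geodesic ray from longer and longer geodesics. -/
lemma koenig (hc : Γ.Connected) (hlf : ∀ v : V, {u | Γ.Adj v u}.Finite)
    (c : V) (f : ℕ → ℕ → V) (R : ℕ → ℕ)
    (hf0 : ∀ n, f n 0 = c)
    (hfd : ∀ n t t', t ≤ t' → t' ≤ R n → Γ.dist (f n t) (f n t') = t' - t)
    (hR : ∀ n, n ≤ R n) :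
    ∃ γ : ℕ → V, γ 0 = c ∧ (∀ t t', t ≤ t' → Γ.dist (γ t) (γ t') = t' - t) ∧
      ∀ m, ∃ n, m ≤ n ∧ ∀ t ≤ m, f n t = γ t := by
  classical
  -- the inductive step
  have step : ∀ (m : ℕ) (T : Set ℕ), T.Infinite →
      ∃ T' : Set ℕ, T'.Infinite ∧ T' ⊆ T ∧ (∀ n ∈ T', m + 1 ≤ n) ∧
        (∀ n ∈ T', ∀ n' ∈ T', f n (m + 1) = f n' (m + 1)) := by
    intro m T hT
    have hT' : {n ∈ T | m + 1 ≤ n}.Infinite := by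
      have : {n ∈ T | m + 1 ≤ n} = T \ {n | n < m + 1} := by
        ext n
        simp only [Set.mem_setOf_eq, Set.mem_diff, Set.sep_setOf, Nat.not_lt]
        all_goals tauto
      rw [this]
      exact hT.diff (Set.finite_Iio (m+1))
    obtain ⟨v, _, hfib⟩ := infinite_fiber hT' (fun n => f n (m + 1))
      (ball_finite hc hlf c (m + 1)) (by
        rintro n ⟨hnT, hn⟩
        have := hfd n 0 (m + 1) (Nat.zero_le _) (le_trans hn (hR n))
        rw [hf0 n] at this
        simp only [Set.mem_setOf_eq]
        omega)
    refine ⟨{n ∈ {n ∈ T | m + 1 ≤ n} | f n (m + 1) = v}, ?_, ?_, ?_, ?_⟩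
    · exact hfib
    · rintro n ⟨⟨h1, _⟩, _⟩; exact h1
    · rintro n ⟨⟨_, h2⟩, _⟩; exact h2
    · rintro n ⟨_, h3⟩ n' ⟨_, h3'⟩; rw [h3, h3']
  -- build the decreasing sequence of infinite sets
  let Sfun : ℕ → {T : Set ℕ // T.Infinite} := fun m => Nat.rec
    ⟨Set.univ, Set.infinite_univ⟩
    (fun m' prev => ⟨Classical.choose (step m' prev.1 prev.2),
      (Classical.choose_spec (step m' prev.1 prev.2)).1⟩) m
  have hSsub : ∀ m, (Sfun (m+1)).1 ⊆ (Sfun m).1 := fun m =>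
    (Classical.choose_spec (step m (Sfun m).1 (Sfun m).2)).2.1
  have hSge : ∀ m, ∀ n ∈ (Sfun (m+1)).1, m + 1 ≤ n := fun m =>
    (Classical.choose_spec (step m (Sfun m).1 (Sfun m).2)).2.2.1
  have hSval : ∀ m, ∀ n ∈ (Sfun (m+1)).1, ∀ n' ∈ (Sfun (m+1)).1, f n (m+1) = f n' (m+1) :=
    fun m => (Classical.choose_spec (step m (Sfun m).1 (Sfun m).2)).2.2.2
  have hSmono : ∀ m m', m ≤ m' → (Sfun m').1 ⊆ (Sfun m).1 := by
    intro m m' h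
    induction m' with
    | zero => have : m = 0 := by omega
              subst this; exact fun _ h => h
    | succ k ih =>
      rcases Nat.lt_or_ge m (k+1) with h' | h'
      · exact fun n hn => ih (by omega) (hSsub k hn)
      · have : m = k + 1 := by omega
        subst this; exact fun _ h => h
  have hSgen : ∀ m, ∀ n ∈ (Sfun m).1, m ≤ n := by
    intro m n hn
    cases m with
    | zero => omega
    | succ k => exact hSge k n hn
  -- pick elements
  have hpick : ∀ m, ∃ n, n ∈ (Sfun m).1 := fun m => (Sfun m).2.nonempty
  let pick : ℕ → ℕ := fun m => Classical.choose (hpick m)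
  have hpickmem : ∀ m, pick m ∈ (Sfun m).1 := fun m => Classical.choose_spec (hpick m)
  let γ : ℕ → V := fun t => f (pick t) t
  -- agreement
  have hagree : ∀ m, ∀ n ∈ (Sfun m).1, ∀ t ≤ m, f n t = γ t := by
    intro m n hn t ht
    show f n t = f (pick t) t
    cases t with
    | zero => rw [hf0, hf0]
    | succ k =>
      exact hSval k n (hSmono (k+1) m ht hn) (pick (k+1)) (hpickmem (k+1))
  refine ⟨γ, by simp only [γ, hf0], ?_, ?_⟩
  · intro t t' htt'
    have hn := hpickmem t'
    have h1 : f (pick t') t = γ t := hagree t' (pick t') hn t htt'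
    have h2 : f (pick t') t' = γ t' := hagree t' (pick t') hn t' (le_refl _)
    rw [← h1, ← h2]
    exact hfd (pick t') t t' htt' (le_trans (hSgen t' _ hn) (hR _))
  · intro m
    exact ⟨pick m, hSgen m _ (hpickmem m), fun t ht => hagree m (pick m) (hpickmem m) t ht⟩


variable {G : Type*} [Group G] [TopologicalSpace G] (d : CayleyAbelsData G)

/-- left translation preserves adjacency in the Cayley-Abels graph (one direction) -/
lemma adj_smul_of_adj (g : G) {c₁ c₂ : G ⧸ d.U} (h : (caGraph d).Adj c₁ c₂) :
    (caGraph d).Adj (g • c₁) (g • c₂) := by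
  obtain ⟨hne, x, y, hx, hy, hcond⟩ := h
  refine ⟨fun hcon => hne (by
    have := congrArg (fun z => g⁻¹ • z) hcon
    simpa [smul_smul] using this), g * x, g * y, ?_, ?_, ?_⟩
  · rw [← hx]; rfl
  · rw [← hy]; rfl
  · have hxy : (g * x)⁻¹ * (g * y) = x⁻¹ * y := by group
    have hyx : (g * y)⁻¹ * (g * x) = y⁻¹ * x := by group
    rw [hxy, hyx]; exact hcond

lemma adj_smul_iff (g : G) (c₁ c₂ : G ⧸ d.U) :
    (caGraph d).Adj (g • c₁) (g • c₂) ↔ (caGraph d).Adj c₁ c₂ := by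
  constructor
  · intro h
    have := adj_smul_of_adj d g⁻¹ h
    simpa [smul_smul] using this
  · exact adj_smul_of_adj d g

/-- the graph homomorphism given by left translation -/
def transHom (g : G) : caGraph d →g caGraph d where
  toFun := (g • ·)
  map_rel' := adj_smul_of_adj d g

@[simp] lemma transHom_apply (g : G) (x : G ⧸ d.U) : transHom d g x = g • x := rfl

lemma reachable_smul (g : G) {c₁ c₂ : G ⧸ d.U} (h : (caGraph d).Reachable c₁ c₂) :
    (caGraph d).Reachable (g • c₁) (g • c₂) := by
  obtain ⟨p⟩ := h
  exact ⟨p.map (transHom d g)⟩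

lemma caGraph_connected : (caGraph d).Connected := by
  have key : ∀ b ∈ Subgroup.closure (d.A : Set G),
      (caGraph d).Reachable (QuotientGroup.mk (1 : G)) (QuotientGroup.mk b) := by
    intro b hb
    induction hb using Subgroup.closure_induction with
    | mem x hx =>
      by_cases hx1 : (QuotientGroup.mk (1:G) : G ⧸ d.U) = QuotientGroup.mk x
      · rw [← hx1]
      · exact SimpleGraph.Adj.reachable
          ⟨hx1, 1, x, rfl, rfl, Or.inl ⟨x, hx, 1, d.U.one_mem, by group⟩⟩
    | one => rfl
    | mul x y hx hy ihx ihy =>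
      refine ihx.trans ?_
      have := reachable_smul d x ihy
      simpa using this
    | inv x hx ihx =>
      have := reachable_smul d x⁻¹ ihx
      have h1 : (x⁻¹ • (QuotientGroup.mk (1:G) : G ⧸ d.U)) = QuotientGroup.mk x⁻¹ := by
        show QuotientGroup.mk (x⁻¹ * 1) = _
        rw [mul_one]
      have h2 : (x⁻¹ • (QuotientGroup.mk x : G ⧸ d.U)) = QuotientGroup.mk (1:G) := by
        show QuotientGroup.mk (x⁻¹ * x) = _
        rw [inv_mul_cancel]
      rw [h1, h2] at this
      exact this.symm
  constructor
  intro c₁ c₂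
  obtain ⟨g₁, rfl⟩ := QuotientGroup.mk_surjective c₁
  obtain ⟨g₂, rfl⟩ := QuotientGroup.mk_surjective c₂
  have reach1 : ∀ g : G, (caGraph d).Reachable (QuotientGroup.mk (1:G)) (QuotientGroup.mk g) := by
    intro g
    obtain ⟨b, hb, u, hu, rfl⟩ := d.gen g
    have hbu : (QuotientGroup.mk (b * u) : G ⧸ d.U) = QuotientGroup.mk b :=
      QuotientGroup.mk_mul_of_mem b hu
    rw [hbu]
    exact key b hb
  exact (reach1 g₁).symm.trans (reach1 g₂)

lemma caGraph_locally_finite (v : G ⧸ d.U) : {u | (caGraph d).Adj v u}.Finite := by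
  classical
  obtain ⟨x, rfl⟩ := QuotientGroup.mk_surjective v
  apply Set.Finite.subset (Set.Finite.image (fun a => (QuotientGroup.mk (x * a) : G ⧸ d.U))
    (d.A : Set G).toFinite)
  rintro u ⟨hne, x₁, y₁, hx₁, hy₁, hcond⟩
  have hux : ∃ a ∈ d.A, u = QuotientGroup.mk (x * a) := by
    have hx₁U : x⁻¹ * x₁ ∈ d.U := by
      have h := hx₁
      rw [QuotientGroup.eq] at h
      simpa using d.U.inv_mem h
    rcases hcond with ⟨a, ha, ut, hut, heq⟩ | ⟨a, ha, ut, hut, heq⟩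
    · -- y₁ = x₁ * a * ut
      have hy : y₁ = x * ((x⁻¹ * x₁) * a * ut) := by
        have : y₁ = x₁ * (a * ut) := by
          rw [← heq]; group
        rw [this]; group
      have hmem : (x⁻¹ * x₁) * a * ut ∈ (d.U : Set G) * (d.A : Set G) * (d.U : Set G) := by
        exact Set.mul_mem_mul (Set.mul_mem_mul hx₁U ha) hut
      rw [d.UAU_eq] at hmem
      obtain ⟨a', ha', u', hu', heq'⟩ := hmem
      refine ⟨a', ha', ?_⟩
      rw [← hy₁, hy, ← heq']
      have : x * (a' * u') = (x * a') * u' := by group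
      rw [this]
      exact QuotientGroup.mk_mul_of_mem (x * a') hu'
    · -- x₁ = y₁ * a * ut, so y₁ = x₁ * ut⁻¹ * a⁻¹
      have hy : y₁ = x * ((x⁻¹ * x₁) * ut⁻¹ * a⁻¹) := by
        have : y₁ = x₁ * ut⁻¹ * a⁻¹ := by
          have hx₁' : x₁ = y₁ * (a * ut) := by rw [← heq]; group
          rw [hx₁']; group
        rw [this]; group
      have hmem : (x⁻¹ * x₁ * ut⁻¹) * a⁻¹ * 1 ∈ (d.U : Set G) * (d.A : Set G) * (d.U : Set G) :=
        Set.mul_mem_mul (Set.mul_mem_mul (d.U.mul_mem hx₁U (d.U.inv_mem hut)) (d.A_symm a ha))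
          d.U.one_mem
      rw [d.UAU_eq] at hmem
      obtain ⟨a', ha', u', hu', heq'⟩ := hmem
      refine ⟨a', ha', ?_⟩
      rw [← hy₁, hy]
      have : (x⁻¹ * x₁) * ut⁻¹ * a⁻¹ = x⁻¹ * x₁ * ut⁻¹ * a⁻¹ * 1 := by group
      rw [this, ← heq']
      have : x * (a' * u') = (x * a') * u' := by group
      rw [this]
      exact QuotientGroup.mk_mul_of_mem (x * a') hu'
  obtain ⟨a, ha, hu⟩ := hux
  exact ⟨a, ha, hu.symm⟩

lemma dist_smul (g : G) (a b : G ⧸ d.U) :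
    (caGraph d).dist (g • a) (g • b) = (caGraph d).dist a b := by
  have hle : ∀ (g : G) (a b : G ⧸ d.U),
      (caGraph d).dist (g • a) (g • b) ≤ (caGraph d).dist a b := by
    intro g a b
    obtain ⟨p, hp⟩ := (caGraph_connected d).exists_walk_length_eq_dist a b
    calc (caGraph d).dist (g • a) (g • b) ≤ (p.map (transHom d g)).length :=
          SimpleGraph.dist_le _
      _ = p.length := SimpleGraph.Walk.length_map _ _
      _ = (caGraph d).dist a b := hp
  refine le_antisymm (hle g a b) ?_
  have := hle g⁻¹ (g • a) (g • b)
  simpa [smul_smul] using this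



lemma mem_cosetOrbit_iff {G : Type*} [Group G] {H U : Subgroup G} {c o : G ⧸ U} :
    o ∈ cosetOrbit H U c ↔ ∃ h ∈ H, h • c = o := by
  constructor
  · rintro ⟨h, hH, x, hx, hhx⟩
    exact ⟨h, hH, by rw [← hx]; exact hhx⟩
  · rintro ⟨h, hH, heq⟩
    obtain ⟨x, rfl⟩ := QuotientGroup.mk_surjective c
    exact ⟨h, hH, x, rfl, heq⟩

lemma self_mem_cosetOrbit {G : Type*} [Group G] {H U : Subgroup G} (c : G ⧸ U) : c ∈ cosetOrbit H U c :=
  mem_cosetOrbit_iff.mpr ⟨1, H.one_mem, one_smul _ _⟩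

lemma smul_mem_cosetOrbit {G : Type*} [Group G] {H U : Subgroup G} {c o : G ⧸ U} {h : G} (hH : h ∈ H)
    (ho : o ∈ cosetOrbit H U c) : h • o ∈ cosetOrbit H U c := by
  obtain ⟨h', hH', heq⟩ := mem_cosetOrbit_iff.mp ho
  exact mem_cosetOrbit_iff.mpr ⟨h * h', H.mul_mem hH hH', by rw [← heq, smul_smul]⟩

lemma raysEquiv_equivalence {V : Type*} {Γ : SimpleGraph V} (hc : Γ.Connected) :
    Equivalence (raysEquiv Γ) := by
  constructor
  · intro r
    exact ⟨0, fun i => ⟨i, by simp [SimpleGraph.dist_self]⟩,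
      fun j => ⟨j, by simp [SimpleGraph.dist_self]⟩⟩
  · rintro r s ⟨C, h1, h2⟩
    refine ⟨C, fun i => ?_, fun j => ?_⟩
    · obtain ⟨j, hj⟩ := h2 i
      exact ⟨j, by rwa [SimpleGraph.dist_comm]⟩
    · obtain ⟨i, hi⟩ := h1 j
      exact ⟨i, by rwa [SimpleGraph.dist_comm]⟩
  · rintro r s t ⟨C₁, h11, h12⟩ ⟨C₂, h21, h22⟩
    refine ⟨C₁ + C₂, fun i => ?_, fun j => ?_⟩
    · obtain ⟨j, hj⟩ := h11 i
      obtain ⟨k, hk⟩ := h21 j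
      exact ⟨k, le_trans hc.dist_triangle (Nat.add_le_add hj hk)⟩
    · obtain ⟨j, hj⟩ := h22 j
      obtain ⟨i', hi'⟩ := h12 j
      exact ⟨i', le_trans hc.dist_triangle (Nat.add_le_add hi' hj)⟩

end QCP

open QCP in
/-- Quasiconvexity is equivalent to all limit points being conical.
Let `G` be a hyperbolic TDLC group and let `H` be an open subgroup of `G`. Then, with
respect to any (hyperbolic) Cayley-Abels graph of `G` and any `H`-orbit of a vertex, `H`
is quasiconvex in `G` if and only if every limit point of `H` is conical. -/
theorem quasiconvex_iff_conical_limit_points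
    (G : Type*) [Group G] [TopologicalSpace G] [IsTopologicalGroup G]
    [T2Space G] [SecondCountableTopology G]
    (hGtdlc : IsTDLC G) (hGhyp : IsHyperbolicGroup G)
    (H : Subgroup G) (hopen : IsOpen (H : Set G)) :
    ∀ d : CayleyAbelsData G, GromovHyperbolic (caGraph d) →
      ∀ c w : G ⧸ d.U,
        (QuasiconvexSet (caGraph d) (cosetOrbit H d.U c) ↔
          ∀ ξ ∈ limitSet (caGraph d) w (cosetOrbit H d.U c),
            IsConicalLimitPoint (caGraph d) (cosetOrbit H d.U c) ξ) := by
  intro d hhyp c w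
  obtain ⟨δ, hδ⟩ := hhyp
  have hc : (caGraph d).Connected := caGraph_connected d
  have hlf := caGraph_locally_finite d
  set Γ := caGraph d with hΓdef
  set O : Set (G ⧸ d.U) := cosetOrbit H d.U c with hOdef
  have hcO : c ∈ O := self_mem_cosetOrbit c
  have tri : ∀ a b e : G ⧸ d.U, Γ.dist a e ≤ Γ.dist a b + Γ.dist b e := fun _ _ _ => hc.dist_triangle
  have dcomm : ∀ a b : G ⧸ d.U, Γ.dist a b = Γ.dist b a := fun _ _ => SimpleGraph.dist_comm
  constructor
  · -- quasiconvex implies conical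
    rintro ⟨D, hD⟩ ξ ⟨x, hxO, s, hsξ, hconv⟩ α hαξ
    have hre : raysEquiv Γ α s := by
      have hmk : Quot.mk (raysEquiv Γ) α = Quot.mk (raysEquiv Γ) s := by rw [hαξ, ← hsξ]
      exact ((raysEquiv_equivalence hc).eqvGen_iff).mp (Quot.eq.mp hmk)
    obtain ⟨C, hC1, _⟩ := hre
    refine ⟨C + Γ.dist w c + Γ.dist w (s.1 0) + 3 * δ + 1 + D, ?_⟩
    intro N
    refine ⟨N, le_refl N, ?_⟩
    set m := α.1 N with hm
    obtain ⟨j, hj0⟩ := hC1 N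
    have hj : Γ.dist m (s.1 j) ≤ C := hj0
    obtain ⟨Nc, hNc⟩ := hconv (2 * Γ.dist w (s.1 j))
    set n := Nc with hn
    set k := max Nc j with hk
    have h1 : 2 * Γ.dist w (s.1 j) + Γ.dist (x n) (s.1 k) ≤ Γ.dist (x n) w + Γ.dist w (s.1 k) :=
      hNc n k (le_refl _) (le_max_left _ _)
    -- distances along the ray s
    have hsjk : Γ.dist (s.1 j) (s.1 k) = k - j := s.2 j k (le_max_right _ _)
    have hs0k : Γ.dist (s.1 0) (s.1 k) = k := s.2 0 k (Nat.zero_le _)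
    have hs0j : Γ.dist (s.1 0) (s.1 j) = j := s.2 0 j (Nat.zero_le _)
    have h2 : (2 : ℤ) * Γ.dist w (s.1 j) - 2 * Γ.dist w (s.1 0) ≤ P Γ w (s.1 k) (s.1 j) := by
      have t1 := tri (s.1 0) w (s.1 k)
      have t2 := tri w (s.1 0) (s.1 j)
      have c1 := dcomm (s.1 0) w
      have c2 := dcomm (s.1 k) (s.1 j)
      have hjk : j ≤ k := le_max_right _ _
      unfold P
      omega
    have h1' : (2 : ℤ) * Γ.dist w (s.1 j) ≤ P Γ w (x n) (s.1 k) := by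
      have c3 := dcomm (x n) w
      unfold P; omega
    have h3 : (2 : ℤ) * Γ.dist w (s.1 j) - 2 * Γ.dist w (s.1 0) - 2 * δ ≤ P Γ w (x n) (s.1 j) := by
      have := prodB hδ w (x n) (s.1 k) (s.1 j)
      have hmin : (2 : ℤ) * Γ.dist w (s.1 j) - 2 * Γ.dist w (s.1 0) ≤
          min (P Γ w (x n) (s.1 k)) (P Γ w (s.1 k) (s.1 j)) :=
        le_min (by omega) h2
      omega
    have h4 : P Γ m c (x n) ≤ 2 * C + 2 * Γ.dist w c + 2 * Γ.dist w (s.1 0) + 2 * δ := by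
      have t1 := tri m (s.1 j) c
      have t2 := tri (s.1 j) w c
      have t3 := tri m (s.1 j) (x n)
      have t4 := tri w c (x n)
      have t5 : P Γ w (x n) (s.1 j) = (Γ.dist w (x n) : ℤ) + Γ.dist w (s.1 j)
          - Γ.dist (x n) (s.1 j) := rfl
      have c4 := dcomm (s.1 j) (x n)
      have c5 := dcomm (x n) w
      have c6 := dcomm w (s.1 j)
      unfold P
      omega
    obtain ⟨p, hp⟩ := hc.exists_walk_length_eq_dist c (x n)
    obtain ⟨t, ht, hzt⟩ := near_geodesic hc hδ p hp m
    have hzsupp : p.getVert t ∈ p.support :=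
      SimpleGraph.Walk.mem_support_iff_exists_getVert.mpr ⟨t, rfl, ht⟩
    obtain ⟨y, hyO, hdy⟩ := hD c (x n) hcO (hxO n) p hp (p.getVert t) hzsupp
    refine ⟨y, hyO, ?_⟩
    have tfin := tri m (p.getVert t) y
    have : (Γ.dist m (p.getVert t) : ℤ) ≤ C + Γ.dist w c + Γ.dist w (s.1 0) + 3 * δ + 1 := by
      omega
    omega
  · -- conical implies quasiconvex
    intro hcon
    by_contra hQC
    unfold QuasiconvexSet at hQC
    push_neg at hQC
    have main : ∀ n : ℕ, ∃ (f : ℕ → (G ⧸ d.U)) (R : ℕ) (b : G ⧸ d.U),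
        f 0 = c ∧ (∀ t t', t ≤ t' → t' ≤ R → Γ.dist (f t) (f t') = t' - t) ∧ n ≤ R ∧
        b ∈ O ∧ (∀ y ∈ O, R ≤ Γ.dist (f R) y) ∧ P Γ (f R) c b ≤ 2 * δ := by
      intro n
      obtain ⟨u, v, huO, hvO, p, hp, z, hzsupp, hzfar⟩ := hQC n
      have hne : {k : ℕ | ∃ y ∈ O, Γ.dist z y = k}.Nonempty := ⟨Γ.dist z c, c, hcO, rfl⟩
      obtain ⟨y₀, hy₀O, hy₀d⟩ := Nat.sInf_mem hne
      set R : ℕ := sInf {k : ℕ | ∃ y ∈ O, Γ.dist z y = k} with hR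
      have hmin : ∀ y ∈ O, R ≤ Γ.dist z y := fun y hy => Nat.sInf_le ⟨y, hy, rfl⟩
      have hnR : n < R := by
        have := hzfar y₀ hy₀O
        omega
      obtain ⟨h, hH, hhc⟩ := mem_cosetOrbit_iff.mp hy₀O
      set φ := transHom d h⁻¹ with hφ
      set z' : G ⧸ d.U := h⁻¹ • z with hz'
      have hz'c : Γ.dist z' c = R := by
        have hcc : c = h⁻¹ • y₀ := by rw [← hhc, smul_smul, inv_mul_cancel, one_smul]
        rw [hcc, hz', QCP.dist_smul, hy₀d]
      have hz'far : ∀ y ∈ O, R ≤ Γ.dist z' y := by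
        intro y hy
        have h1 : Γ.dist z' y = Γ.dist z (h • y) := by
          rw [hz', ← QCP.dist_smul d h (h⁻¹ • z) y, smul_smul, mul_inv_cancel, one_smul]
        rw [h1]
        exact hmin (h • y) (smul_mem_cosetOrbit hH hy)
      set σ : Γ.Walk (h⁻¹ • u) (h⁻¹ • v) := p.map φ with hσ
      have hσlen : σ.length = Γ.dist (h⁻¹ • u) (h⁻¹ • v) := by
        show (p.map φ).length = _
        rw [SimpleGraph.Walk.length_map, hp, QCP.dist_smul]
      have hz'supp : z' ∈ σ.support := by
        show z' ∈ (p.map φ).support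
        rw [SimpleGraph.Walk.support_map]
        exact List.mem_map.mpr ⟨z, hzsupp, rfl⟩
      obtain ⟨tz, htz, htzle⟩ := SimpleGraph.Walk.mem_support_iff_exists_getVert.mp hz'supp
      have hu'O : h⁻¹ • u ∈ O := smul_mem_cosetOrbit (H.inv_mem hH) huO
      have hv'O : h⁻¹ • v ∈ O := smul_mem_cosetOrbit (H.inv_mem hH) hvO
      have hd1 : Γ.dist (h⁻¹ • u) z' = tz := by
        have := geodesic_getVert_dist hc σ hσlen (Nat.zero_le tz) htzle
        rwa [SimpleGraph.Walk.getVert_zero, htz, Nat.sub_zero] at this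
      have hd2 : Γ.dist z' (h⁻¹ • v) = σ.length - tz := by
        have := geodesic_getVert_dist hc σ hσlen htzle (le_refl _)
        rwa [SimpleGraph.Walk.getVert_length, htz] at this
      have hd3 : Γ.dist (h⁻¹ • u) (h⁻¹ • v) = σ.length := hσlen.symm
      have hb : ∃ b ∈ O, P Γ z' c b ≤ 2 * δ ∧ R ≤ Γ.dist z' b := by
        have hP0 : P Γ z' (h⁻¹ • u) (h⁻¹ • v) = 0 := by
          unfold P
          have c1 := dcomm (h⁻¹ • u) z'
          omega
        have hprod := prodB hδ z' (h⁻¹ • u) c (h⁻¹ • v)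
        rw [hP0] at hprod
        rcases le_total (P Γ z' (h⁻¹ • u) c) (P Γ z' c (h⁻¹ • v)) with hle | hle
        · refine ⟨h⁻¹ • u, hu'O, ?_, hz'far _ hu'O⟩
          rw [P_comm]
          rw [min_eq_left hle] at hprod
          omega
        · refine ⟨h⁻¹ • v, hv'O, ?_, hz'far _ hv'O⟩
          rw [min_eq_right hle] at hprod
          omega
      obtain ⟨b, hbO, hbP, hbR⟩ := hb
      obtain ⟨g, hg⟩ := hc.exists_walk_length_eq_dist c z'
      have hglen : g.length = R := by rw [hg, dcomm, hz'c]
      have hgR : g.getVert R = z' := by rw [← hglen, SimpleGraph.Walk.getVert_length]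
      refine ⟨fun t => g.getVert t, R, b, SimpleGraph.Walk.getVert_zero g, ?_, by omega, hbO, ?_, ?_⟩
      · intro t t' htt' ht'
        exact geodesic_getVert_dist hc g hg htt' (by omega)
      · show ∀ y ∈ O, R ≤ Γ.dist (g.getVert R) y
        rw [hgR]; exact hz'far
      · show P Γ (g.getVert R) c b ≤ 2 * δ
        rw [hgR]; exact hbP
    choose f R b hf0 hfd hnR hbO hfar hPb using main
    obtain ⟨γ, hγ0, hray, hkey⟩ := koenig hc hlf c f R hf0 hfd hnR
    choose nsel hnsel1 hnsel2 using hkey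
    -- the ray escapes from O linearly
    have F1 : ∀ i : ℕ, ∀ y ∈ O, i ≤ Γ.dist (γ i) y := by
      intro i y hy
      set n := nsel i with hn
      have hγi : f n i = γ i := hnsel2 i i (le_refl i)
      have hiR : i ≤ R n := le_trans (hnsel1 i) (hnR n)
      have h1 : Γ.dist (f n i) (f n (R n)) = R n - i := hfd n i (R n) hiR (le_refl _)
      have h2 := hfar n y hy
      have h3 := tri (f n (R n)) (f n i) y
      rw [hγi] at h1 h3
      have c1 := dcomm (γ i) (f n (R n))
      omega
    -- Gromov product estimates
    have E1 : ∀ m k : ℕ, k ≤ m → (2 * k - 4 * δ : ℤ) ≤ P Γ c (γ k) (b (nsel m)) := by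
      intro m k hkm
      set n := nsel m with hn
      have hmR : m ≤ R n := le_trans (hnsel1 m) (hnR n)
      have hγk : f n k = γ k := hnsel2 m k hkm
      have hdc : Γ.dist c (γ k) = k := by
        have := hray 0 k (Nat.zero_le k)
        rwa [hγ0, Nat.sub_zero] at this
      have hdz : Γ.dist c (f n (R n)) = R n := by
        have := hfd n 0 (R n) (Nat.zero_le _) (le_refl _)
        rwa [hf0, Nat.sub_zero] at this
      have hdkz : Γ.dist (γ k) (f n (R n)) = R n - k := by
        have := hfd n k (R n) (le_trans hkm hmR) (le_refl _)
        rwa [hγk] at this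
      have hP1 : P Γ c (γ k) (f n (R n)) = 2 * k := by
        unfold P
        omega
      have hP2 : (2 * (R n) - 2 * δ : ℤ) ≤ P Γ c (f n (R n)) (b n) := by
        have hp2 := hPb n
        have hfb := hfar n (b n) (hbO n)
        have c1 := dcomm (f n (R n)) c
        unfold P at hp2 ⊢
        omega
      have hprod := prodB hδ c (γ k) (f n (R n)) (b n)
      rw [hP1] at hprod
      have : (2 * k - 2 * δ : ℤ) ≤ min (2 * (k : ℤ)) (P Γ c (f n (R n)) (b n)) := by
        refine le_min (by omega) (by omega)
      omega
    have E2 : ∀ m k : ℕ, (2 * (min m k : ℕ) - 6 * δ : ℤ) ≤ P Γ c (γ k) (b (nsel m)) := by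
      intro m k
      rcases le_total k m with hkm | hmk
      · have := E1 m k hkm
        have : (min m k) = k := min_eq_right hkm
        have := E1 m k hkm
        rw [min_eq_right hkm]
        omega
      · have hPmm := E1 m m (le_refl m)
        have hdm : Γ.dist c (γ m) = m := by
          have := hray 0 m (Nat.zero_le m)
          rwa [hγ0, Nat.sub_zero] at this
        have hdk : Γ.dist c (γ k) = k := by
          have := hray 0 k (Nat.zero_le k)
          rwa [hγ0, Nat.sub_zero] at this
        have hdmk : Γ.dist (γ m) (γ k) = k - m := hray m k hmk
        have hPγ : P Γ c (γ k) (γ m) = 2 * m := by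
          unfold P
          have c1 := dcomm (γ m) (γ k)
          omega
        have hprod := prodB hδ c (γ k) (γ m) (b (nsel m))
        rw [hPγ] at hprod
        have hminb : (2 * m - 4 * δ : ℤ) ≤ min (2 * (m : ℤ)) (P Γ c (γ m) (b (nsel m))) :=
          le_min (by omega) hPmm
        rw [min_eq_left hmk]
        omega
    -- the boundary point
    set γray : GeodesicRay Γ := ⟨γ, fun i j hij => hray i j hij⟩ with hγray
    set ξ : GromovBoundary Γ := Quot.mk (raysEquiv Γ) γray with hξ
    have hlim : ξ ∈ limitSet Γ w O := by
      refine ⟨fun m => b (nsel m), fun m => hbO (nsel m), γray, rfl, ?_⟩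
      intro M
      refine ⟨M + 6 * δ + 2 * Γ.dist c w, ?_⟩
      intro n k hn hk
      have hE := E2 n k
      have hbp := P_basepoint hc c w (γ k) (b (nsel n))
      have hminnk : M + 6 * δ + 2 * Γ.dist c w ≤ min n k := le_min hn hk
      have c1 := dcomm w (b (nsel n))
      have c2 := dcomm (γ k) (b (nsel n))
      unfold P at hE hbp
      show M + Γ.dist (b (nsel n)) (γray.1 k) ≤ Γ.dist (b (nsel n)) w + Γ.dist w (γray.1 k)
      have hγrayk : γray.1 k = γ k := rfl
      rw [hγrayk]
      have c3 := dcomm (b (nsel n)) w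
      have c4 := dcomm (b (nsel n)) (γ k)
      omega
    obtain ⟨r, hr⟩ := hcon ξ hlim γray rfl
    obtain ⟨i, hi, y, hyO, hdy⟩ := hr (r + 1)
    have hdy' : Γ.dist (γ i) y ≤ r := hdy
    have := F1 i y hyO
    omega
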